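/- arXiv:1210.3673 — 8 statements merged into one kernel-verified Lean document; each statement's English description precedes it below -/
import Mathlib

section
/- Let λ₁, λ₂ : ℝ² → ℝ be C² functions with λ₁ ≠ λ₂ on an open set. Define the coefficients C₁⁽ˣ⁾ = −(∂λ₂/∂r₂)/(λ₁−λ₂), C₂⁽ˣ⁾ = (∂λ₁/∂r₁)/(λ₁−λ₂) of the equation for x, and C₁⁽ᵠ⁾ = (∂λ₁/∂r₂)/(λ₁−λ₂), C₂⁽ᵠ⁾ = −(∂λ₂/∂r₁)/(λ₁−λ₂) of the equation for φ. Then the Laplace invariants satisfy h⁽ˣ⁾ := ∂C₁⁽ˣ⁾/∂r₁ + C₁⁽ˣ⁾C₂⁽ˣ⁾ = −(1/(λ₁−λ₂)) ∂²λ₂/∂r₁∂r₂ − (1/(λ₁−λ₂)²) (∂λ₂/∂r₁)(∂λ₂/∂r₂), and this quantity equals k⁽ᵠ⁾ := ∂C₂⁽ᵠ⁾/∂r₂ + C₁⁽ᵠ⁾C₂⁽ᵠ⁾. -/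
open ContinuousLinearMap in
private lemma aux_fderiv_quot (lam₁ lam₂ : ℝ × ℝ → ℝ) (p v w : ℝ × ℝ)
    (h1 : ContDiffAt ℝ 2 lam₁ p) (h2 : ContDiffAt ℝ 2 lam₂ p)
    (hD : lam₁ p - lam₂ p ≠ 0) :
    fderiv ℝ (fun q => -(fderiv ℝ lam₂ q w) / (lam₁ q - lam₂ q)) p v =
      (-(fderiv ℝ (fderiv ℝ lam₂) p v w) * (lam₁ p - lam₂ p)
        + fderiv ℝ lam₂ p w * (fderiv ℝ lam₁ p v - fderiv ℝ lam₂ p v))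
        / (lam₁ p - lam₂ p) ^ 2 := by
  have hF : HasFDerivAt (fderiv ℝ lam₂) (fderiv ℝ (fderiv ℝ lam₂) p) p := by
    have : ContDiffAt ℝ 1 (fderiv ℝ lam₂) p := h2.fderiv_right (m := 1) le_rfl
    exact (this.differentiableAt one_ne_zero).hasFDerivAt
  -- derivative of q ↦ fderiv lam₂ q w
  have hg : HasFDerivAt (fun q => fderiv ℝ lam₂ q w)
      ((ContinuousLinearMap.apply ℝ ℝ w).comp (fderiv ℝ (fderiv ℝ lam₂) p)) p :=
    (ContinuousLinearMap.apply ℝ ℝ w).hasFDerivAt.comp p hF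
  have hgn : HasFDerivAt (fun q => -(fderiv ℝ lam₂ q w))
      (-((ContinuousLinearMap.apply ℝ ℝ w).comp (fderiv ℝ (fderiv ℝ lam₂) p))) p := hg.neg
  -- derivative of denominator
  have hd1 : HasFDerivAt lam₁ (fderiv ℝ lam₁ p) p :=
    (h1.differentiableAt two_ne_zero).hasFDerivAt
  have hd2 : HasFDerivAt lam₂ (fderiv ℝ lam₂ p) p :=
    (h2.differentiableAt two_ne_zero).hasFDerivAt
  have hd : HasFDerivAt (fun q => lam₁ q - lam₂ q)
      (fderiv ℝ lam₁ p - fderiv ℝ lam₂ p) p := hd1.sub hd2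
  -- derivative of inverse of denominator
  have hinv : HasDerivAt (fun y : ℝ => y⁻¹) (-((lam₁ p - lam₂ p) ^ 2)⁻¹) (lam₁ p - lam₂ p) :=
    hasDerivAt_inv hD
  have hdinv : HasFDerivAt (fun q => (lam₁ q - lam₂ q)⁻¹)
      ((-((lam₁ p - lam₂ p) ^ 2)⁻¹) • (fderiv ℝ lam₁ p - fderiv ℝ lam₂ p)) p :=
    hinv.comp_hasFDerivAt p hd
  have hmul : HasFDerivAt (fun q => -(fderiv ℝ lam₂ q w) * (lam₁ q - lam₂ q)⁻¹) _ p :=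
    hgn.mul hdinv
  have heq : (fun q => -(fderiv ℝ lam₂ q w) / (lam₁ q - lam₂ q))
      = fun q => -(fderiv ℝ lam₂ q w) * (lam₁ q - lam₂ q)⁻¹ := by
    funext q; rw [div_eq_mul_inv]
  rw [heq]
  rw [hmul.fderiv]
  simp only [ContinuousLinearMap.add_apply, ContinuousLinearMap.smul_apply,
    ContinuousLinearMap.neg_apply, ContinuousLinearMap.coe_comp', Function.comp_apply,
    ContinuousLinearMap.sub_apply, ContinuousLinearMap.apply_apply, smul_eq_mul]
  field_simp
  ring

/-- For C² eigenvalues `λ₁ ≠ λ₂` on an open set, the Laplace invariant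
`h⁽ˣ⁾ = ∂C₁⁽ˣ⁾/∂r₁ + C₁⁽ˣ⁾C₂⁽ˣ⁾` of the equation for `x` equals
`−(1/(λ₁−λ₂)) ∂²λ₂/∂r₁∂r₂ − (1/(λ₁−λ₂)²)(∂λ₂/∂r₁)(∂λ₂/∂r₂)`, and this equals
the Laplace invariant `k⁽ᵠ⁾ = ∂C₂⁽ᵠ⁾/∂r₂ + C₁⁽ᵠ⁾C₂⁽ᵠ⁾` of the equation for `φ`. -/
theorem laplace_invariant_h_x_eq_k_phi
    (lam₁ lam₂ : ℝ × ℝ → ℝ) (s : Set (ℝ × ℝ)) (hs : IsOpen s)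
    (hlam₁ : ContDiffOn ℝ 2 lam₁ s) (hlam₂ : ContDiffOn ℝ 2 lam₂ s)
    (hne : ∀ p ∈ s, lam₁ p ≠ lam₂ p) :
    ∀ p ∈ s,
      -- h⁽ˣ⁾ := ∂C₁⁽ˣ⁾/∂r₁ + C₁⁽ˣ⁾C₂⁽ˣ⁾
      (fderiv ℝ (fun q => -(fderiv ℝ lam₂ q (0, 1)) / (lam₁ q - lam₂ q)) p (1, 0)
          + (-(fderiv ℝ lam₂ p (0, 1)) / (lam₁ p - lam₂ p))
            * (fderiv ℝ lam₁ p (1, 0) / (lam₁ p - lam₂ p))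
        = -(1 / (lam₁ p - lam₂ p))
            * fderiv ℝ (fun q => fderiv ℝ lam₂ q (0, 1)) p (1, 0)
          - (1 / (lam₁ p - lam₂ p)) ^ 2
            * (fderiv ℝ lam₂ p (1, 0) * fderiv ℝ lam₂ p (0, 1)))
      ∧
      -- h⁽ˣ⁾ = k⁽ᵠ⁾ := ∂C₂⁽ᵠ⁾/∂r₂ + C₁⁽ᵠ⁾C₂⁽ᵠ⁾
      (fderiv ℝ (fun q => -(fderiv ℝ lam₂ q (0, 1)) / (lam₁ q - lam₂ q)) p (1, 0)
          + (-(fderiv ℝ lam₂ p (0, 1)) / (lam₁ p - lam₂ p))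
            * (fderiv ℝ lam₁ p (1, 0) / (lam₁ p - lam₂ p))
        = fderiv ℝ (fun q => -(fderiv ℝ lam₂ q (1, 0)) / (lam₁ q - lam₂ q)) p (0, 1)
          + (fderiv ℝ lam₁ p (0, 1) / (lam₁ p - lam₂ p))
            * (-(fderiv ℝ lam₂ p (1, 0)) / (lam₁ p - lam₂ p))) := by
  intro p hp
  have h1 : ContDiffAt ℝ 2 lam₁ p := hlam₁.contDiffAt (hs.mem_nhds hp)
  have h2 : ContDiffAt ℝ 2 lam₂ p := hlam₂.contDiffAt (hs.mem_nhds hp)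
  have hD : lam₁ p - lam₂ p ≠ 0 := sub_ne_zero.mpr (hne p hp)
  -- the second-derivative evaluation
  have hF : HasFDerivAt (fderiv ℝ lam₂) (fderiv ℝ (fderiv ℝ lam₂) p) p := by
    have : ContDiffAt ℝ 1 (fderiv ℝ lam₂) p := h2.fderiv_right (m := 1) le_rfl
    exact (this.differentiableAt one_ne_zero).hasFDerivAt
  have hg : ∀ w : ℝ × ℝ, fderiv ℝ (fun q => fderiv ℝ lam₂ q w) p
      = (ContinuousLinearMap.apply ℝ ℝ w).comp (fderiv ℝ (fderiv ℝ lam₂) p) := by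
    intro w
    exact (((ContinuousLinearMap.apply ℝ ℝ w).hasFDerivAt.comp p hF)).fderiv
  have hsymm : fderiv ℝ (fderiv ℝ lam₂) p (1, 0) (0, 1)
      = fderiv ℝ (fderiv ℝ lam₂) p (0, 1) (1, 0) :=
    (h2.isSymmSndFDerivAt (by simp [minSmoothness_of_isRCLikeNormedField])) (1, 0) (0, 1)
  have e1 := aux_fderiv_quot lam₁ lam₂ p (1, 0) (0, 1) h1 h2 hD
  have e2 := aux_fderiv_quot lam₁ lam₂ p (0, 1) (1, 0) h1 h2 hD
  have e3 : fderiv ℝ (fun q => fderiv ℝ lam₂ q (0, 1)) p (1, 0)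
      = fderiv ℝ (fderiv ℝ lam₂) p (1, 0) (0, 1) := by
    rw [hg (0, 1)]; simp
  constructor
  · rw [e1, e3]
    field_simp
    ring
  · rw [e1, e2]
    rw [hsymm]
    field_simp
    ring
end

section
/- Let λ₁, λ₂ : ℝ² → ℝ be C² functions with λ₁ ≠ λ₂ on an open set. With the coefficients C₁⁽ˣ⁾ = −(∂λ₂/∂r₂)/(λ₁−λ₂), C₂⁽ˣ⁾ = (∂λ₁/∂r₁)/(λ₁−λ₂) and C₁⁽ᵠ⁾ = (∂λ₁/∂r₂)/(λ₁−λ₂), C₂⁽ᵠ⁾ = −(∂λ₂/∂r₁)/(λ₁−λ₂), the Laplace invariants satisfy k⁽ˣ⁾ := ∂C₂⁽ˣ⁾/∂r₂ + C₁⁽ˣ⁾C₂⁽ˣ⁾ = (1/(λ₁−λ₂)) ∂²λ₁/∂r₁∂r₂ − (1/(λ₁−λ₂)²) (∂λ₁/∂r₁)(∂λ₁/∂r₂), and this quantity equals h⁽ᵠ⁾ := ∂C₁⁽ᵠ⁾/∂r₁ + C₁⁽ᵠ⁾C₂⁽ᵠ⁾. -/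
private lemma fderiv_div_apply' (c d : ℝ × ℝ → ℝ) (p v : ℝ × ℝ) (hc : DifferentiableAt ℝ c p)
    (hd : DifferentiableAt ℝ d p) (hx : d p ≠ 0) :
    fderiv ℝ (fun q => c q / d q) p v
      = (fderiv ℝ c p v * d p - c p * fderiv ℝ d p v) / d p ^ 2 := by
  have hinv : HasFDerivAt (fun q => (d q)⁻¹) ((-(d p ^ 2)⁻¹) • fderiv ℝ d p) p :=
    (hasDerivAt_inv hx).comp_hasFDerivAt p hd.hasFDerivAt
  have hm := hc.hasFDerivAt.mul hinv
  have h : fderiv ℝ (fun q => c q / d q) p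
      = c p • ((-(d p ^ 2)⁻¹) • fderiv ℝ d p) + (d p)⁻¹ • fderiv ℝ c p := by
    simp only [div_eq_mul_inv]
    exact hm.fderiv
  rw [h]
  simp [smul_eq_mul]
  field_simp
  ring



/-- For C² eigenvalues `λ₁ ≠ λ₂` on an open set, the Laplace invariant
`k⁽ˣ⁾ = ∂C₂⁽ˣ⁾/∂r₂ + C₁⁽ˣ⁾C₂⁽ˣ⁾` of the equation for `x` equals
`(1/(λ₁−λ₂)) ∂²λ₁/∂r₁∂r₂ − (1/(λ₁−λ₂)²)(∂λ₁/∂r₁)(∂λ₁/∂r₂)`, and this equals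
the Laplace invariant `h⁽ᵠ⁾ = ∂C₁⁽ᵠ⁾/∂r₁ + C₁⁽ᵠ⁾C₂⁽ᵠ⁾` of the equation for `φ`. -/
theorem laplace_invariant_k_x_eq_h_phi
    (lam₁ lam₂ : ℝ × ℝ → ℝ) (s : Set (ℝ × ℝ)) (hs : IsOpen s)
    (hlam₁ : ContDiffOn ℝ 2 lam₁ s) (hlam₂ : ContDiffOn ℝ 2 lam₂ s)
    (hne : ∀ p ∈ s, lam₁ p ≠ lam₂ p) :
    ∀ p ∈ s,
      -- k⁽ˣ⁾ := ∂C₂⁽ˣ⁾/∂r₂ + C₁⁽ˣ⁾C₂⁽ˣ⁾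
      (fderiv ℝ (fun q => fderiv ℝ lam₁ q (1, 0) / (lam₁ q - lam₂ q)) p (0, 1)
          + (-(fderiv ℝ lam₂ p (0, 1)) / (lam₁ p - lam₂ p))
            * (fderiv ℝ lam₁ p (1, 0) / (lam₁ p - lam₂ p))
        = (1 / (lam₁ p - lam₂ p))
            * fderiv ℝ (fun q => fderiv ℝ lam₁ q (0, 1)) p (1, 0)
          - (1 / (lam₁ p - lam₂ p)) ^ 2
            * (fderiv ℝ lam₁ p (1, 0) * fderiv ℝ lam₁ p (0, 1)))
      ∧
      -- k⁽ˣ⁾ = h⁽ᵠ⁾ := ∂C₁⁽ᵠ⁾/∂r₁ + C₁⁽ᵠ⁾C₂⁽ᵠ⁾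
      (fderiv ℝ (fun q => fderiv ℝ lam₁ q (1, 0) / (lam₁ q - lam₂ q)) p (0, 1)
          + (-(fderiv ℝ lam₂ p (0, 1)) / (lam₁ p - lam₂ p))
            * (fderiv ℝ lam₁ p (1, 0) / (lam₁ p - lam₂ p))
        = fderiv ℝ (fun q => fderiv ℝ lam₁ q (0, 1) / (lam₁ q - lam₂ q)) p (1, 0)
          + (fderiv ℝ lam₁ p (0, 1) / (lam₁ p - lam₂ p))
            * (-(fderiv ℝ lam₂ p (1, 0)) / (lam₁ p - lam₂ p))) := by
  intro p hp
  have hmem : s ∈ nhds p := hs.mem_nhds hp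
  have h1 : ContDiffAt ℝ 2 lam₁ p := hlam₁.contDiffAt hmem
  have h2 : ContDiffAt ℝ 2 lam₂ p := hlam₂.contDiffAt hmem
  have hd1 : DifferentiableAt ℝ lam₁ p := h1.differentiableAt (by norm_num)
  have hd2 : DifferentiableAt ℝ lam₂ p := h2.differentiableAt (by norm_num)
  have hF1 : DifferentiableAt ℝ (fderiv ℝ lam₁) p :=
    (h1.fderiv_right (m := 1) (by norm_num)).differentiableAt one_ne_zero
  have hE : ∀ v : ℝ × ℝ, DifferentiableAt ℝ (fun q => fderiv ℝ lam₁ q v) p := fun v =>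
    (ContinuousLinearMap.apply ℝ ℝ v).differentiableAt.comp p hF1
  have hEval : ∀ v w : ℝ × ℝ,
      fderiv ℝ (fun q => fderiv ℝ lam₁ q v) p w = fderiv ℝ (fderiv ℝ lam₁) p w v := by
    intro v w
    have := fderiv_clm_apply (c := fderiv ℝ lam₁) (u := fun _ => v) hF1
      (differentiableAt_const v)
    rw [show (fun q => fderiv ℝ lam₁ q v) = fun y => (fderiv ℝ lam₁ y) ((fun _ => v) y) from rfl,
      this]
    simp
  have hsymm : IsSymmSndFDerivAt ℝ lam₁ p := h1.isSymmSndFDerivAt (by simp [minSmoothness_of_isRCLikeNormedField])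
  have hswap : fderiv ℝ (fun q => fderiv ℝ lam₁ q (1, 0)) p (0, 1)
      = fderiv ℝ (fun q => fderiv ℝ lam₁ q (0, 1)) p (1, 0) := by
    rw [hEval, hEval, hsymm]
  have hdD : DifferentiableAt ℝ (fun q => lam₁ q - lam₂ q) p := hd1.sub hd2
  have hDne : lam₁ p - lam₂ p ≠ 0 := sub_ne_zero.mpr (hne p hp)
  have hDval : ∀ v : ℝ × ℝ, fderiv ℝ (fun q => lam₁ q - lam₂ q) p v
      = fderiv ℝ lam₁ p v - fderiv ℝ lam₂ p v := by
    intro v; rw [fderiv_fun_sub hd1 hd2]; simp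
  have hq1 := fderiv_div_apply' (fun q => fderiv ℝ lam₁ q (1, 0))
    (fun q => lam₁ q - lam₂ q) p (0, 1) (hE (1, 0)) hdD hDne
  have hq2 := fderiv_div_apply' (fun q => fderiv ℝ lam₁ q (0, 1))
    (fun q => lam₁ q - lam₂ q) p (1, 0) (hE (0, 1)) hdD hDne
  rw [hDval] at hq1 hq2
  rw [hswap] at hq1
  constructor
  · rw [hq1]
    field_simp
    ring
  · rw [hq1, hq2]
    field_simp
    ring
end

section
/- Let ρ : ℝ² → ℝ be a C² function of (r₁,r₂), set v := (r₂ − r₁)/2, and define φ := 2 (∂ρ/∂r₁) cos v − ρ sin v and ψ := 2 (∂ρ/∂r₁) sin v + ρ cos v. Then at every point where sin v ≠ 0 and cos v ≠ 0: (i) the first conservation-law equation tan v · ∂φ/∂r₁ = ∂ψ/∂r₁ holds identically; and (ii) the second conservation-law equation −cot v · ∂φ/∂r₂ = ∂ψ/∂r₂ holds if and only if ρ satisfies the telegraph equation ∂²ρ/∂r₁∂r₂ = ρ/4. -/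
/-- With `v = (r₂−r₁)/2`, `φ = 2 ρ_{r₁} cos v − ρ sin v`,
`ψ = 2 ρ_{r₁} sin v + ρ cos v`, the first conservation-law equation
`tan v · ∂φ/∂r₁ = ∂ψ/∂r₁` holds identically, and the second one
`−cot v · ∂φ/∂r₂ = ∂ψ/∂r₂` holds iff `ρ` satisfies the telegraph equation
`∂²ρ/∂r₁∂r₂ = ρ/4`. -/
theorem plasticity_conservation_law_telegraph
    (ρ : ℝ × ℝ → ℝ) (hρ : ContDiff ℝ 2 ρ)
    (p : ℝ × ℝ)
    (hsin : Real.sin ((p.2 - p.1) / 2) ≠ 0)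
    (hcos : Real.cos ((p.2 - p.1) / 2) ≠ 0) :
    (Real.tan ((p.2 - p.1) / 2)
        * fderiv ℝ (fun q => 2 * fderiv ℝ ρ q (1, 0) * Real.cos ((q.2 - q.1) / 2)
            - ρ q * Real.sin ((q.2 - q.1) / 2)) p (1, 0)
      = fderiv ℝ (fun q => 2 * fderiv ℝ ρ q (1, 0) * Real.sin ((q.2 - q.1) / 2)
            + ρ q * Real.cos ((q.2 - q.1) / 2)) p (1, 0))
    ∧
    ((-(Real.cos ((p.2 - p.1) / 2) / Real.sin ((p.2 - p.1) / 2)))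
        * fderiv ℝ (fun q => 2 * fderiv ℝ ρ q (1, 0) * Real.cos ((q.2 - q.1) / 2)
            - ρ q * Real.sin ((q.2 - q.1) / 2)) p (0, 1)
      = fderiv ℝ (fun q => 2 * fderiv ℝ ρ q (1, 0) * Real.sin ((q.2 - q.1) / 2)
            + ρ q * Real.cos ((q.2 - q.1) / 2)) p (0, 1)
    ↔ fderiv ℝ (fun q => fderiv ℝ ρ q (0, 1)) p (1, 0) = ρ p / 4) := by
  have hρd : Differentiable ℝ ρ := hρ.differentiable two_ne_zero
  have hd1 : ContDiff ℝ 1 (fderiv ℝ ρ) := hρ.fderiv_right (le_refl 2)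
  have hBd : DifferentiableAt ℝ (fderiv ℝ ρ) p := (hd1.differentiable one_ne_zero) p
  set s := Real.sin ((p.2 - p.1) / 2) with hs
  set c := Real.cos ((p.2 - p.1) / 2) with hc
  set B := fderiv ℝ (fderiv ℝ ρ) p with hB
  set L := fderiv ℝ ρ p with hL
  -- derivative of the linear coordinate function v = (r₂ - r₁)/2
  set V : (ℝ × ℝ) →L[ℝ] ℝ :=
    (2⁻¹ : ℝ) • ((ContinuousLinearMap.snd ℝ ℝ ℝ) - (ContinuousLinearMap.fst ℝ ℝ ℝ)) with hV
  have hVd : HasFDerivAt (fun q : ℝ × ℝ => (q.2 - q.1) / 2) V p := by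
    have h1 : HasFDerivAt (fun q : ℝ × ℝ => q.2 - q.1)
        ((ContinuousLinearMap.snd ℝ ℝ ℝ) - (ContinuousLinearMap.fst ℝ ℝ ℝ)) p :=
      (hasFDerivAt_snd).sub (hasFDerivAt_fst)
    have h2 := h1.const_smul (2⁻¹ : ℝ)
    simpa [div_eq_inv_mul, smul_eq_mul, mul_comm, Pi.smul_def] using h2
  have hCos : HasFDerivAt (fun q : ℝ × ℝ => Real.cos ((q.2 - q.1) / 2)) ((-s) • V) p :=
    (Real.hasDerivAt_cos ((p.2 - p.1) / 2)).comp_hasFDerivAt (h₂ := Real.cos) p hVd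
  have hSin : HasFDerivAt (fun q : ℝ × ℝ => Real.sin ((q.2 - q.1) / 2)) (c • V) p :=
    (Real.hasDerivAt_sin ((p.2 - p.1) / 2)).comp_hasFDerivAt (h₂ := Real.sin) p hVd
  have hf1 : ∀ u : ℝ × ℝ, HasFDerivAt (fun q => fderiv ℝ ρ q u)
      (L.comp 0 + B.flip u) p :=
    fun u => hBd.hasFDerivAt.clm_apply (hasFDerivAt_const u p)
  have hρp : HasFDerivAt ρ L p := (hρd p).hasFDerivAt
  -- derivatives of φ and ψ
  have hφ : HasFDerivAt (fun q => 2 * fderiv ℝ ρ q (1, 0) * Real.cos ((q.2 - q.1) / 2)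
      - ρ q * Real.sin ((q.2 - q.1) / 2))
      (((2 * fderiv ℝ ρ p (1, 0)) • ((-s) • V) + c • ((2:ℝ) • (L.comp 0 + B.flip (1, 0))))
        - (ρ p • (c • V) + s • L)) p :=
    ((((hf1 (1, 0)).const_mul 2).mul hCos).sub (hρp.mul hSin))
  have hψ : HasFDerivAt (fun q => 2 * fderiv ℝ ρ q (1, 0) * Real.sin ((q.2 - q.1) / 2)
      + ρ q * Real.cos ((q.2 - q.1) / 2))
      (((2 * fderiv ℝ ρ p (1, 0)) • (c • V) + s • ((2:ℝ) • (L.comp 0 + B.flip (1, 0))))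
        + (ρ p • ((-s) • V) + c • L)) p :=
    ((((hf1 (1, 0)).const_mul 2).mul hSin).add (hρp.mul hCos))
  set a := fderiv ℝ ρ p (1, 0) with ha
  set b := fderiv ℝ ρ p (0, 1) with hb
  have hV10 : V (1, 0) = -(1/2 : ℝ) := by
    simp [hV]
  have hV01 : V (0, 1) = (1/2 : ℝ) := by
    simp [hV]
  have hφ1 : fderiv ℝ (fun q => 2 * fderiv ℝ ρ q (1, 0) * Real.cos ((q.2 - q.1) / 2)
      - ρ q * Real.sin ((q.2 - q.1) / 2)) p (1, 0)
      = 2 * B (1, 0) (1, 0) * c + ρ p * c / 2 := by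
    rw [hφ.fderiv]
    simp [ContinuousLinearMap.sub_apply, ContinuousLinearMap.add_apply,
      ContinuousLinearMap.smul_apply, ContinuousLinearMap.comp_apply,
      ContinuousLinearMap.flip_apply, hV10, smul_eq_mul, ← ha]
    ring
  have hψ1 : fderiv ℝ (fun q => 2 * fderiv ℝ ρ q (1, 0) * Real.sin ((q.2 - q.1) / 2)
      + ρ q * Real.cos ((q.2 - q.1) / 2)) p (1, 0)
      = 2 * B (1, 0) (1, 0) * s + ρ p * s / 2 := by
    rw [hψ.fderiv]
    simp [ContinuousLinearMap.sub_apply, ContinuousLinearMap.add_apply,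
      ContinuousLinearMap.smul_apply, ContinuousLinearMap.comp_apply,
      ContinuousLinearMap.flip_apply, hV10, smul_eq_mul, ← ha]
    ring
  have hφ2 : fderiv ℝ (fun q => 2 * fderiv ℝ ρ q (1, 0) * Real.cos ((q.2 - q.1) / 2)
      - ρ q * Real.sin ((q.2 - q.1) / 2)) p (0, 1)
      = -(a * s) + 2 * B (0, 1) (1, 0) * c - ρ p * c / 2 - s * b := by
    rw [hφ.fderiv]
    simp [ContinuousLinearMap.sub_apply, ContinuousLinearMap.add_apply,
      ContinuousLinearMap.smul_apply, ContinuousLinearMap.comp_apply,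
      ContinuousLinearMap.flip_apply, hV01, smul_eq_mul, ← ha, ← hb]
    ring
  have hψ2 : fderiv ℝ (fun q => 2 * fderiv ℝ ρ q (1, 0) * Real.sin ((q.2 - q.1) / 2)
      + ρ q * Real.cos ((q.2 - q.1) / 2)) p (0, 1)
      = a * c + 2 * B (0, 1) (1, 0) * s - ρ p * s / 2 + c * b := by
    rw [hψ.fderiv]
    simp [ContinuousLinearMap.sub_apply, ContinuousLinearMap.add_apply,
      ContinuousLinearMap.smul_apply, ContinuousLinearMap.comp_apply,
      ContinuousLinearMap.flip_apply, hV01, smul_eq_mul, ← ha, ← hb]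
    ring
  -- the mixed second derivative appearing in the telegraph equation
  have hmix : fderiv ℝ (fun q => fderiv ℝ ρ q (0, 1)) p (1, 0) = B (0, 1) (1, 0) := by
    have h1 : fderiv ℝ (fun q => fderiv ℝ ρ q (0, 1)) p (1, 0) = B (1, 0) (0, 1) := by
      rw [(hf1 (0, 1)).fderiv]
      simp [ContinuousLinearMap.add_apply, ContinuousLinearMap.comp_apply,
        ContinuousLinearMap.flip_apply]
    have hsym : IsSymmSndFDerivAt ℝ ρ p :=
      (hρ.contDiffAt).isSymmSndFDerivAt (by simp)
    rw [h1]
    exact (hsym (1, 0) (0, 1))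
  set M := B (0, 1) (1, 0) with hM
  have hpy : s ^ 2 + c ^ 2 = 1 := Real.sin_sq_add_cos_sq _
  constructor
  · rw [hφ1, hψ1, Real.tan_eq_sin_div_cos, ← hs, ← hc]
    field_simp
  · rw [hφ2, hψ2, hmix]
    constructor
    · intro h
      have h' : -c * (-(a * s) + 2 * M * c - ρ p * c / 2 - s * b)
          = s * (a * c + 2 * M * s - ρ p * s / 2 + c * b) := by
        field_simp at h
        linear_combination h / 2
      linear_combination (-1/2 : ℝ) * h' + (ρ p / 4 - M) * hpy
    · intro h
      rw [h]
      field_simp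
      ring
end

section
/- Let α ∈ (0, π/2) with α ≠ π/4, k > 0, and let σ, Θ : ℝ² → ℝ be differentiable functions of (x,y) satisfying the plane soil plasticity system with Coulomb yield criterion: (1+cos 2α cos 2Θ) ∂σ/∂x + cos 2α sin 2Θ ∂σ/∂y = 2(σ cos 2α + k sin 2α)(sin 2Θ ∂Θ/∂x − cos 2Θ ∂Θ/∂y) and cos 2α sin 2Θ ∂σ/∂x + (1 − cos 2α cos 2Θ) ∂σ/∂y = −2(σ cos 2α + k sin 2α)(cos 2Θ ∂Θ/∂x + sin 2Θ ∂Θ/∂y), at a point where σ cot 2α + k > 0, cos(Θ+α) ≠ 0 and cos(Θ−α) ≠ 0. Then the Riemann invariants r₁ := (tan 2α / 2) ln(σ cot 2α + k) + Θ and r₂ := (tan 2α / 2) ln(σ cot 2α + k) − Θ satisfy ∂r₁/∂x + tan(Θ+α) ∂r₁/∂y = 0 and ∂r₂/∂x + tan(Θ−α) ∂r₂/∂y = 0 at that point. -/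
open Real

set_option linter.unusedVariables false

lemma key_lemma (sA cA sB cB Lx Ly Mx My S : ℝ)
    (hA : sA^2 + cA^2 = 1) (hB : sB^2 + cB^2 = 1)
    (h1 : (1 + (cA*cB+sA*sB)*(cA*cB-sA*sB))*Lx + (cA*cB+sA*sB)*(sA*cB+cA*sB)*Ly
        = S*((sA*cB+cA*sB)*Mx - (cA*cB-sA*sB)*My))
    (h2 : (cA*cB+sA*sB)*(sA*cB+cA*sB)*Lx + (1 - (cA*cB+sA*sB)*(cA*cB-sA*sB))*Ly
        = -(S*((cA*cB-sA*sB)*Mx + (sA*cB+cA*sB)*My))) :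
    cA*(sA*cB-cA*sB)*Lx + sA*(sA*cB-cA*sB)*Ly + S*(cA*Mx + sA*My) = 0 ∧
    cB*(sA*cB-cA*sB)*Lx + sB*(sA*cB-cA*sB)*Ly - S*(cB*Mx + sB*My) = 0 := by
  constructor
  · linear_combination (-sB) * h1 + cB * h2
      + (cB*Ly - sB*cB^2*Lx - sB^3*Lx) * hA
      + (-sB*Lx - cA*S*Mx + cA^2*cB*Ly + cA^2*sB*Lx - sA*S*My - sA*cA*cB*Lx + sA*cA*sB*Ly) * hB
  · linear_combination sA * h1 + (-cA) * h2
      + (S*cB*Mx + S*sB*My - cA*cB^2*Ly + cA*sB*cB*Lx - sA*sB*cB*Ly + sA*sB^2*Lx) * hA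
      + (-cA*Ly + sA*Lx) * hB


/-- For a differentiable solution `(σ, Θ)` of the plane soil plasticity
system with Coulomb yield criterion, the Riemann invariants
`r₁,₂ = (tan 2α / 2) ln(σ cot 2α + k) ± Θ` satisfy
`∂r₁/∂x + tan(Θ+α) ∂r₁/∂y = 0` and `∂r₂/∂x + tan(Θ−α) ∂r₂/∂y = 0`. -/
theorem coulomb_plasticity_riemann_invariants
    (α k : ℝ) (hα : α ∈ Set.Ioo 0 (Real.pi / 2)) (hα4 : α ≠ Real.pi / 4)
    (hk : 0 < k) (σ Θ : ℝ × ℝ → ℝ)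
    (hσ : Differentiable ℝ σ) (hΘ : Differentiable ℝ Θ)
    (p : ℝ × ℝ)
    (heq₁ : (1 + Real.cos (2 * α) * Real.cos (2 * Θ p)) * fderiv ℝ σ p (1, 0)
        + Real.cos (2 * α) * Real.sin (2 * Θ p) * fderiv ℝ σ p (0, 1)
      = 2 * (σ p * Real.cos (2 * α) + k * Real.sin (2 * α))
          * (Real.sin (2 * Θ p) * fderiv ℝ Θ p (1, 0)
            - Real.cos (2 * Θ p) * fderiv ℝ Θ p (0, 1)))
    (heq₂ : Real.cos (2 * α) * Real.sin (2 * Θ p) * fderiv ℝ σ p (1, 0)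
        + (1 - Real.cos (2 * α) * Real.cos (2 * Θ p)) * fderiv ℝ σ p (0, 1)
      = -(2 * (σ p * Real.cos (2 * α) + k * Real.sin (2 * α))
          * (Real.cos (2 * Θ p) * fderiv ℝ Θ p (1, 0)
            + Real.sin (2 * Θ p) * fderiv ℝ Θ p (0, 1))))
    (hpos : 0 < σ p * (Real.cos (2 * α) / Real.sin (2 * α)) + k)
    (hc₁ : Real.cos (Θ p + α) ≠ 0) (hc₂ : Real.cos (Θ p - α) ≠ 0) :
    (fderiv ℝ (fun q => Real.tan (2 * α) / 2
          * Real.log (σ q * (Real.cos (2 * α) / Real.sin (2 * α)) + k) + Θ q) p (1, 0)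
        + Real.tan (Θ p + α)
          * fderiv ℝ (fun q => Real.tan (2 * α) / 2
            * Real.log (σ q * (Real.cos (2 * α) / Real.sin (2 * α)) + k) + Θ q) p (0, 1)
      = 0)
    ∧ (fderiv ℝ (fun q => Real.tan (2 * α) / 2
          * Real.log (σ q * (Real.cos (2 * α) / Real.sin (2 * α)) + k) - Θ q) p (1, 0)
        + Real.tan (Θ p - α)
          * fderiv ℝ (fun q => Real.tan (2 * α) / 2
            * Real.log (σ q * (Real.cos (2 * α) / Real.sin (2 * α)) + k) - Θ q) p (0, 1)
      = 0) := by
  obtain ⟨hα0, hα2⟩ := hα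
  have hπ := Real.pi_pos
  have hs2a : 0 < Real.sin (2 * α) :=
    Real.sin_pos_of_pos_of_lt_pi (by linarith) (by linarith)
  have hs2a' : Real.sin (2 * α) ≠ 0 := ne_of_gt hs2a
  have hc2a : Real.cos (2 * α) ≠ 0 := by
    intro h
    rcases Real.cos_eq_zero_iff.mp h with ⟨n, hn⟩
    have h1 : (0:ℝ) < 2*(n:ℝ)+1 := by nlinarith
    have h2 : (2*(n:ℝ)+1) < 2 := by nlinarith
    have h1' : (0:ℤ) < 2*n+1 := by exact_mod_cast h1
    have h2' : (2*n+1 : ℤ) < 2 := by exact_mod_cast h2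
    have : n = 0 := by omega
    subst this
    apply hα4
    push_cast at hn
    linarith
  set gp := σ p * (Real.cos (2 * α) / Real.sin (2 * α)) + k with hgpdef
  have hgp : gp ≠ 0 := ne_of_gt hpos
  set L := fderiv ℝ σ p with hL
  set M := fderiv ℝ Θ p with hM
  have hσ' : HasFDerivAt σ L p := (hσ p).hasFDerivAt
  have hΘ' : HasFDerivAt Θ M p := (hΘ p).hasFDerivAt
  have hg : HasFDerivAt (fun q => σ q * (Real.cos (2*α) / Real.sin (2*α)) + k)
      ((Real.cos (2*α) / Real.sin (2*α)) • L) p := (hσ'.mul_const _).add_const k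
  have hlog : HasFDerivAt
      (fun q => Real.log (σ q * (Real.cos (2*α) / Real.sin (2*α)) + k))
      (gp⁻¹ • ((Real.cos (2*α) / Real.sin (2*α)) • L)) p :=
    by have := (Real.hasDerivAt_log hgp).comp_hasFDerivAt p hg; exact this
  have hr1 : HasFDerivAt (fun q => Real.tan (2 * α) / 2
        * Real.log (σ q * (Real.cos (2 * α) / Real.sin (2 * α)) + k) + Θ q)
      ((Real.tan (2*α)/2) • (gp⁻¹ • ((Real.cos (2*α) / Real.sin (2*α)) • L)) + M) p :=
    (hlog.const_mul _).add hΘ'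
  have hr2 : HasFDerivAt (fun q => Real.tan (2 * α) / 2
        * Real.log (σ q * (Real.cos (2 * α) / Real.sin (2 * α)) + k) - Θ q)
      ((Real.tan (2*α)/2) • (gp⁻¹ • ((Real.cos (2*α) / Real.sin (2*α)) • L)) - M) p :=
    (hlog.const_mul _).sub hΘ'
  rw [hr1.fderiv, hr2.fderiv]
  simp only [ContinuousLinearMap.add_apply, ContinuousLinearMap.sub_apply,
    ContinuousLinearMap.coe_smul', Pi.smul_apply, smul_eq_mul]
  -- abbreviations
  set sA := Real.sin (Θ p + α) with hsA
  set cA := Real.cos (Θ p + α) with hcA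
  set sB := Real.sin (Θ p - α) with hsB
  set cB := Real.cos (Θ p - α) with hcB
  have hA : sA^2 + cA^2 = 1 := Real.sin_sq_add_cos_sq _
  have hB : sB^2 + cB^2 = 1 := Real.sin_sq_add_cos_sq _
  have hs2Θ : Real.sin (2 * Θ p) = sA*cB + cA*sB := by
    rw [show 2 * Θ p = (Θ p + α) + (Θ p - α) by ring, Real.sin_add]
  have hc2Θ : Real.cos (2 * Θ p) = cA*cB - sA*sB := by
    rw [show 2 * Θ p = (Θ p + α) + (Θ p - α) by ring, Real.cos_add]
  have hs2α : Real.sin (2 * α) = sA*cB - cA*sB := by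
    rw [show 2 * α = (Θ p + α) - (Θ p - α) by ring, Real.sin_sub]
  have hc2α : Real.cos (2 * α) = cA*cB + sA*sB := by
    rw [show 2 * α = (Θ p + α) - (Θ p - α) by ring, Real.cos_sub]
  rw [hs2Θ, hc2Θ, hs2α, hc2α] at heq₁ heq₂
  obtain ⟨E1, E2⟩ := key_lemma sA cA sB cB (L (1,0)) (L (0,1)) (M (1,0)) (M (0,1))
    (2 * (σ p * (cA*cB+sA*sB) + k * (sA*cB-cA*sB))) hA hB
    (by linear_combination heq₁) (by linear_combination heq₂)
  have hgpeq : gp * Real.sin (2*α) = σ p * Real.cos (2*α) + k * Real.sin (2*α) := by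
    rw [hgpdef]; field_simp
  have E1' : cA * Real.sin (2*α) * L (1,0) + sA * Real.sin (2*α) * L (0,1)
      + 2 * gp * Real.sin (2*α) * (cA * M (1,0) + sA * M (0,1)) = 0 := by
    linear_combination E1 + (cA * L (1,0) + sA * L (0,1)) * hs2α
      + 2*(cA * M (1,0) + sA * M (0,1)) * hgpeq
      + 2*(cA * M (1,0) + sA * M (0,1)) * σ p * hc2α
      + 2*(cA * M (1,0) + sA * M (0,1)) * k * hs2α
  have E2' : cB * Real.sin (2*α) * L (1,0) + sB * Real.sin (2*α) * L (0,1)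
      - 2 * gp * Real.sin (2*α) * (cB * M (1,0) + sB * M (0,1)) = 0 := by
    linear_combination E2 + (cB * L (1,0) + sB * L (0,1)) * hs2α
      - 2*(cB * M (1,0) + sB * M (0,1)) * hgpeq
      - 2*(cB * M (1,0) + sB * M (0,1)) * σ p * hc2α
      - 2*(cB * M (1,0) + sB * M (0,1)) * k * hs2α
  constructor
  · rw [Real.tan_eq_sin_div_cos (2*α), Real.tan_eq_sin_div_cos (Θ p + α), ← hsA, ← hcA]
    field_simp
    apply mul_left_cancel₀ hs2a'
    linear_combination E1'
  · rw [Real.tan_eq_sin_div_cos (2*α), Real.tan_eq_sin_div_cos (Θ p - α), ← hsB, ← hcB]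
    field_simp
    apply mul_left_cancel₀ hs2a'
    linear_combination E2'
end

section
/- Let α ∈ (0, π/2) with sin 2α ≠ 0, and let Φ, Ψ : ℝ² → ℝ be C¹ functions of (r₁,r₂) satisfying ∂Φ/∂r₂ + Ψ/(2 sin 2α) = 0 and ∂Ψ/∂r₁ + Φ/(2 sin 2α) = 0. Set Θ := (r₁ − r₂)/2 and define φ := (e^{cot 2α·(r₁+r₂)/2}/sin 2α)·(−Φ cos(Θ+α) + Ψ cos(Θ−α)) and ψ := (e^{cot 2α·(r₁+r₂)/2}/sin 2α)·(−Φ sin(Θ+α) + Ψ sin(Θ−α)). Then, at every point where cos(Θ+α) ≠ 0 and cos(Θ−α) ≠ 0, the pair (φ, ψ) satisfies the conservation-law system of the Coulomb plasticity problem: ∂ψ/∂r₁ − tan((r₁−r₂)/2 + α) ∂φ/∂r₁ = 0 and ∂ψ/∂r₂ − tan((r₁−r₂)/2 − α) ∂φ/∂r₂ = 0. -/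
set_option maxHeartbeats 2000000


/-- If `(Φ, Ψ)` solve `∂Φ/∂r₂ + Ψ/(2 sin 2α) = 0`,
`∂Ψ/∂r₁ + Φ/(2 sin 2α) = 0`, then with `Θ = (r₁−r₂)/2`,
`φ = (e^{cot 2α (r₁+r₂)/2}/sin 2α)(−Φ cos(Θ+α) + Ψ cos(Θ−α))`,
`ψ = (e^{cot 2α (r₁+r₂)/2}/sin 2α)(−Φ sin(Θ+α) + Ψ sin(Θ−α))`, the pair `(φ,ψ)`
satisfies the conservation-law system of the Coulomb plasticity problem. -/
theorem coulomb_substitution_conservation_law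
    (α : ℝ) (hα : α ∈ Set.Ioo 0 (Real.pi / 2)) (hsin : Real.sin (2 * α) ≠ 0)
    (Φ Ψ : ℝ × ℝ → ℝ) (hΦ : ContDiff ℝ 1 Φ) (hΨ : ContDiff ℝ 1 Ψ)
    (h₁ : ∀ p : ℝ × ℝ, fderiv ℝ Φ p (0, 1) + Ψ p / (2 * Real.sin (2 * α)) = 0)
    (h₂ : ∀ p : ℝ × ℝ, fderiv ℝ Ψ p (1, 0) + Φ p / (2 * Real.sin (2 * α)) = 0) :
    ∀ p : ℝ × ℝ, Real.cos ((p.1 - p.2) / 2 + α) ≠ 0 →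
      Real.cos ((p.1 - p.2) / 2 - α) ≠ 0 →
      (fderiv ℝ (fun q =>
            Real.exp ((Real.cos (2 * α) / Real.sin (2 * α)) * (q.1 + q.2) / 2)
              / Real.sin (2 * α)
              * (-(Φ q) * Real.sin ((q.1 - q.2) / 2 + α)
                + Ψ q * Real.sin ((q.1 - q.2) / 2 - α))) p (1, 0)
          - Real.tan ((p.1 - p.2) / 2 + α)
            * fderiv ℝ (fun q =>
                Real.exp ((Real.cos (2 * α) / Real.sin (2 * α)) * (q.1 + q.2) / 2)
                  / Real.sin (2 * α)
                  * (-(Φ q) * Real.cos ((q.1 - q.2) / 2 + α)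
                    + Ψ q * Real.cos ((q.1 - q.2) / 2 - α))) p (1, 0) = 0)
      ∧ (fderiv ℝ (fun q =>
            Real.exp ((Real.cos (2 * α) / Real.sin (2 * α)) * (q.1 + q.2) / 2)
              / Real.sin (2 * α)
              * (-(Φ q) * Real.sin ((q.1 - q.2) / 2 + α)
                + Ψ q * Real.sin ((q.1 - q.2) / 2 - α))) p (0, 1)
          - Real.tan ((p.1 - p.2) / 2 - α)
            * fderiv ℝ (fun q =>
                Real.exp ((Real.cos (2 * α) / Real.sin (2 * α)) * (q.1 + q.2) / 2)
                  / Real.sin (2 * α)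
                  * (-(Φ q) * Real.cos ((q.1 - q.2) / 2 + α)
                    + Ψ q * Real.cos ((q.1 - q.2) / 2 - α))) p (0, 1) = 0) := by
  intro p hca hcb
  have hdivc : ∀ (f : ℝ × ℝ → ℝ) (f' : ℝ × ℝ →L[ℝ] ℝ) (c : ℝ), HasFDerivAt f f' p →
      HasFDerivAt (fun y => f y / c) (c⁻¹ • f') p := by
    intro f f' c h
    simp only [div_eq_inv_mul]
    exact h.const_mul c⁻¹
  have hΦp : HasFDerivAt Φ (fderiv ℝ Φ p) p :=
    ((hΦ.differentiable one_ne_zero) p).hasFDerivAt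
  have hΨp : HasFDerivAt Ψ (fderiv ℝ Ψ p) p :=
    ((hΨ.differentiable one_ne_zero) p).hasFDerivAt
  have hfst : HasFDerivAt (fun q : ℝ × ℝ => q.1) (ContinuousLinearMap.fst ℝ ℝ ℝ) p :=
    hasFDerivAt_fst
  have hsnd : HasFDerivAt (fun q : ℝ × ℝ => q.2) (ContinuousLinearMap.snd ℝ ℝ ℝ) p :=
    hasFDerivAt_snd
  have hu : HasFDerivAt
      (fun q : ℝ × ℝ => Real.cos (2 * α) / Real.sin (2 * α) * (q.1 + q.2) / 2)
      ((2:ℝ)⁻¹ • ((Real.cos (2 * α) / Real.sin (2 * α)) •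
        (ContinuousLinearMap.fst ℝ ℝ ℝ + ContinuousLinearMap.snd ℝ ℝ ℝ))) p :=
    hdivc _ _ _ ((hfst.add hsnd).const_mul _)
  have hE : HasFDerivAt
      (fun q : ℝ × ℝ => Real.exp (Real.cos (2 * α) / Real.sin (2 * α) * (q.1 + q.2) / 2)
        / Real.sin (2 * α))
      ((Real.sin (2 * α))⁻¹ •
        (Real.exp (Real.cos (2 * α) / Real.sin (2 * α) * (p.1 + p.2) / 2) •
          ((2:ℝ)⁻¹ • ((Real.cos (2 * α) / Real.sin (2 * α)) •
            (ContinuousLinearMap.fst ℝ ℝ ℝ + ContinuousLinearMap.snd ℝ ℝ ℝ))))) p :=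
    hdivc _ _ _ hu.exp
  have hΘ : HasFDerivAt (fun q : ℝ × ℝ => (q.1 - q.2) / 2)
      ((2:ℝ)⁻¹ • (ContinuousLinearMap.fst ℝ ℝ ℝ - ContinuousLinearMap.snd ℝ ℝ ℝ)) p :=
    hdivc _ _ _ (hfst.sub hsnd)
  have hA := hΘ.add_const α
  have hB := hΘ.sub_const α
  have hψ := hE.mul ((hΦp.neg.mul hA.sin).add (hΨp.mul hB.sin))
  have hφ := hE.mul ((hΦp.neg.mul hA.cos).add (hΨp.mul hB.cos))
  simp only [Pi.mul_apply, Pi.add_apply, Pi.neg_apply] at hψ hφ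
  erw [hψ.fderiv, hφ.fderiv]
  have hs2 : Real.sin (2 * α) =
      Real.sin ((p.1 - p.2) / 2 + α) * Real.cos ((p.1 - p.2) / 2 - α)
        - Real.cos ((p.1 - p.2) / 2 + α) * Real.sin ((p.1 - p.2) / 2 - α) := by
    have h2 : 2 * α = ((p.1 - p.2) / 2 + α) - ((p.1 - p.2) / 2 - α) := by ring
    rw [h2, Real.sin_sub]
  have hc2 : Real.cos (2 * α) =
      Real.cos ((p.1 - p.2) / 2 + α) * Real.cos ((p.1 - p.2) / 2 - α)
        + Real.sin ((p.1 - p.2) / 2 + α) * Real.sin ((p.1 - p.2) / 2 - α) := by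
    have h2 : 2 * α = ((p.1 - p.2) / 2 + α) - ((p.1 - p.2) / 2 - α) := by ring
    rw [h2, Real.cos_sub]
  have hpa : Real.sin ((p.1 - p.2) / 2 + α) ^ 2 + Real.cos ((p.1 - p.2) / 2 + α) ^ 2 = 1 :=
    Real.sin_sq_add_cos_sq _
  have hpb : Real.sin ((p.1 - p.2) / 2 - α) ^ 2 + Real.cos ((p.1 - p.2) / 2 - α) ^ 2 = 1 :=
    Real.sin_sq_add_cos_sq _
  have hF2 : fderiv ℝ Φ p (0, 1) * (2 * Real.sin (2 * α)) + Ψ p = 0 := by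
    have := h₁ p
    field_simp at this
    linarith
  have hG1 : fderiv ℝ Ψ p (1, 0) * (2 * Real.sin (2 * α)) + Φ p = 0 := by
    have := h₂ p
    field_simp at this
    linarith
  set E := Real.exp (Real.cos (2 * α) / Real.sin (2 * α) * (p.1 + p.2) / 2) with hE'
  set s := Real.sin (2 * α) with hs'
  set c2 := Real.cos (2 * α) with hc2'
  set F := Φ p with hF'
  set G := Ψ p with hG'
  have hpa2 : Real.sin ((p.1 - p.2 + α * 2) / 2) ^ 2
      + Real.cos ((p.1 - p.2 + α * 2) / 2) ^ 2 = 1 := Real.sin_sq_add_cos_sq _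
  have hpb2 : Real.sin ((p.1 - p.2 - 2 * α) / 2) ^ 2
      + Real.cos ((p.1 - p.2 - 2 * α) / 2) ^ 2 = 1 := Real.sin_sq_add_cos_sq _
  constructor
  · simp only [ContinuousLinearMap.add_apply, ContinuousLinearMap.smul_apply,
      ContinuousLinearMap.sub_apply, ContinuousLinearMap.coe_fst',
      ContinuousLinearMap.coe_snd', smul_eq_mul]
    rw [Real.tan_eq_sin_div_cos, sub_eq_zero,
      div_mul_eq_mul_div (Real.sin ((p.1 - p.2) / 2 + α)) (Real.cos ((p.1 - p.2) / 2 + α)),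
      eq_div_iff hca]
    refine mul_right_cancel₀ (pow_ne_zero 2 hsin) ?_
    linear_combination (norm := (field_simp; linear_combination)) (-(E*s*F)/2) * hpa + (-(E*s*G)/2) * hc2
      + (E*s*(fderiv ℝ Ψ p (1, 0)) + E*c2*G/2) * hs2 + (-(E*s)/2) * hG1
  · simp only [ContinuousLinearMap.add_apply, ContinuousLinearMap.smul_apply,
      ContinuousLinearMap.sub_apply, ContinuousLinearMap.coe_fst',
      ContinuousLinearMap.coe_snd', smul_eq_mul]
    rw [Real.tan_eq_sin_div_cos, sub_eq_zero,
      div_mul_eq_mul_div (Real.sin ((p.1 - p.2) / 2 - α)) (Real.cos ((p.1 - p.2) / 2 - α)),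
      eq_div_iff hcb]
    refine mul_right_cancel₀ (pow_ne_zero 2 hsin) ?_
    linear_combination (norm := (field_simp; simp only [ContinuousLinearMap.neg_apply]; linear_combination)) (-(E*s*G)/2) * hpb + (-(E*s*F)/2) * hc2
      + (E*s*(fderiv ℝ Φ p (0, 1)) + E*c2*F/2) * hs2 + (-(E*s)/2) * hF2
end

section
/- Let χ₀, τ₀ > 0 and let u, v : ℝ² → ℝ be C² functions of (x,y) with u > 0 satisfying the system ∂u/∂x − ∂v/∂y = 0 and ∂v/∂x − (χ₀²/u²) ∂u/∂y = 0. Define U(t,X) := τ₀ e^{−t/τ₀} u(e^{t/τ₀}, X). Then U satisfies the nonlinear hyperbolic heat equation ∂/∂t (∂U/∂t + U/τ₀) − ∂/∂X ((χ₀²/U²) ∂U/∂X) = 0 for all (t, X) ∈ ℝ². -/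
open Real ContinuousLinearMap

/-- Derivative of `w ↦ exp (w.1 / τ₀)`. -/
lemma aux_exp1 (τ₀ : ℝ) (w : ℝ × ℝ) :
    HasFDerivAt (fun w : ℝ × ℝ => Real.exp (w.1 / τ₀))
      ((Real.exp (w.1 / τ₀) / τ₀) • ContinuousLinearMap.fst ℝ ℝ ℝ) w := by
  have h1 : HasFDerivAt (fun w : ℝ × ℝ => w.1 / τ₀)
      (τ₀⁻¹ • ContinuousLinearMap.fst ℝ ℝ ℝ) w := by
    simpa [div_eq_inv_mul] using (hasFDerivAt_fst (𝕜 := ℝ) (p := w)).const_mul τ₀⁻¹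
  have h2 := h1.exp
  rw [smul_smul] at h2
  rw [div_eq_mul_inv]
  exact h2

/-- Derivative of `w ↦ τ₀ * exp (-w.1 / τ₀)`. -/
lemma aux_exp2 (τ₀ : ℝ) (hτ : τ₀ ≠ 0) (w : ℝ × ℝ) :
    HasFDerivAt (fun w : ℝ × ℝ => τ₀ * Real.exp (-w.1 / τ₀))
      (-(Real.exp (-w.1 / τ₀) • ContinuousLinearMap.fst ℝ ℝ ℝ)) w := by
  have h1 : HasFDerivAt (fun w : ℝ × ℝ => -w.1 / τ₀)
      (-(τ₀⁻¹ • ContinuousLinearMap.fst ℝ ℝ ℝ)) w := by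
    have h1 := ((hasFDerivAt_fst (𝕜 := ℝ) (p := w)).const_mul τ₀⁻¹).neg
    have : (fun w : ℝ × ℝ => -w.1 / τ₀) = (fun x : ℝ × ℝ => -(τ₀⁻¹ * x.1)) := by
      funext x; ring
    rw [this]
    exact h1
  have h2 := (h1.exp).const_mul τ₀
  rw [smul_neg, smul_neg, smul_smul, smul_smul] at h2
  rw [show (τ₀ * Real.exp (-w.1 / τ₀) * τ₀⁻¹) = Real.exp (-w.1 / τ₀) by
    field_simp] at h2
  exact h2

/-- Derivative of `w ↦ exp (w.1 / τ₀) / τ₀`. -/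
lemma aux_exp3 (τ₀ : ℝ) (w : ℝ × ℝ) :
    HasFDerivAt (fun w : ℝ × ℝ => Real.exp (w.1 / τ₀) / τ₀)
      (τ₀⁻¹ • ((Real.exp (w.1 / τ₀) / τ₀) • ContinuousLinearMap.fst ℝ ℝ ℝ)) w := by
  have h := (aux_exp1 τ₀ w).const_mul τ₀⁻¹
  have : (fun w : ℝ × ℝ => Real.exp (w.1 / τ₀) / τ₀)
      = (fun x : ℝ × ℝ => τ₀⁻¹ * Real.exp (x.1 / τ₀)) := by
    funext x; ring
  rw [this]
  exact h

/-- Evaluating a bilinear-like map on a first-coordinate vector. -/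
lemma aux_eval1 (A : ℝ × ℝ →L[ℝ] ℝ) (c : ℝ) :
    A (c, 0) = c * A (1, 0) := by
  have : ((c : ℝ), (0 : ℝ)) = c • ((1 : ℝ), (0 : ℝ)) := by simp
  rw [this, map_smul]
  simp

lemma aux_eval2 (B : ℝ × ℝ →L[ℝ] (ℝ × ℝ →L[ℝ] ℝ)) (c : ℝ) (z : ℝ × ℝ) :
    B (c, 0) z = c * B (1, 0) z := by
  have : ((c : ℝ), (0 : ℝ)) = c • ((1 : ℝ), (0 : ℝ)) := by simp
  rw [this, map_smul]
  simp

/-- If `(u, v)` with `u > 0` solve `∂u/∂x − ∂v/∂y = 0`,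
`∂v/∂x − (χ₀²/u²) ∂u/∂y = 0`, then `U(t,X) := τ₀ e^{−t/τ₀} u(e^{t/τ₀}, X)` solves
the nonlinear hyperbolic heat equation
`∂/∂t(∂U/∂t + U/τ₀) − ∂/∂X((χ₀²/U²) ∂U/∂X) = 0`. -/
theorem hyperbolic_heat_equation
    (χ₀ τ₀ : ℝ) (hχ₀ : 0 < χ₀) (hτ₀ : 0 < τ₀)
    (u v : ℝ × ℝ → ℝ) (hu : ContDiff ℝ 2 u) (hv : ContDiff ℝ 2 v)
    (hupos : ∀ p : ℝ × ℝ, 0 < u p)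
    (heq₁ : ∀ p : ℝ × ℝ, fderiv ℝ u p (1, 0) - fderiv ℝ v p (0, 1) = 0)
    (heq₂ : ∀ p : ℝ × ℝ,
      fderiv ℝ v p (1, 0) - χ₀ ^ 2 / (u p) ^ 2 * fderiv ℝ u p (0, 1) = 0)
    (U : ℝ × ℝ → ℝ)
    (hU : U = fun w => τ₀ * Real.exp (-w.1 / τ₀) * u (Real.exp (w.1 / τ₀), w.2)) :
    ∀ w : ℝ × ℝ,
      fderiv ℝ (fun w' => fderiv ℝ U w' (1, 0) + U w' / τ₀) w (1, 0)
        - fderiv ℝ (fun w' => χ₀ ^ 2 / (U w') ^ 2 * fderiv ℝ U w' (0, 1)) w (0, 1)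
        = 0 := by
  intro w₀
  have hτ : τ₀ ≠ 0 := ne_of_gt hτ₀
  set g : ℝ × ℝ → ℝ × ℝ := fun w => (Real.exp (w.1 / τ₀), w.2) with hgdef
  set Dg : ℝ × ℝ → (ℝ × ℝ →L[ℝ] ℝ × ℝ) := fun w =>
    ((Real.exp (w.1 / τ₀) / τ₀) • ContinuousLinearMap.fst ℝ ℝ ℝ).prod
      (ContinuousLinearMap.snd ℝ ℝ ℝ) with hDgdef
  have hg : ∀ w : ℝ × ℝ, HasFDerivAt g (Dg w) w := fun w =>
    HasFDerivAt.prodMk (aux_exp1 τ₀ w) hasFDerivAt_snd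
  have hDg10 : ∀ w : ℝ × ℝ, Dg w (1, 0) = (Real.exp (w.1 / τ₀) / τ₀, 0) := by
    intro w; simp [hDgdef]
  have hDg01 : ∀ w : ℝ × ℝ, Dg w (0, 1) = (0, 1) := by
    intro w; simp [hDgdef]
  have hud : ∀ p : ℝ × ℝ, HasFDerivAt u (fderiv ℝ u p) p := fun p =>
    ((hu.differentiable (by norm_num)) p).hasFDerivAt
  have hUd : ∀ w : ℝ × ℝ, HasFDerivAt U
      (((τ₀ * Real.exp (-w.1 / τ₀)) • ((fderiv ℝ u (g w)).comp (Dg w)))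
        + (u (g w) • (-(Real.exp (-w.1 / τ₀) • ContinuousLinearMap.fst ℝ ℝ ℝ)))) w := by
    intro w
    rw [hU]
    exact (aux_exp2 τ₀ hτ w).mul ((hud (g w)).comp w (hg w))
  have hexp_mul : ∀ t : ℝ, Real.exp (-t / τ₀) * Real.exp (t / τ₀) = 1 := by
    intro t
    rw [← Real.exp_add, show -t / τ₀ + t / τ₀ = 0 by ring, Real.exp_zero]
  -- value of fderiv U in the t-direction
  have hU10 : ∀ w : ℝ × ℝ, fderiv ℝ U w (1, 0)
      = fderiv ℝ u (g w) (1, 0) - Real.exp (-w.1 / τ₀) * u (g w) := by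
    intro w
    rw [(hUd w).fderiv]
    simp only [ContinuousLinearMap.add_apply, ContinuousLinearMap.smul_apply,
      ContinuousLinearMap.comp_apply, ContinuousLinearMap.neg_apply, smul_eq_mul]
    rw [hDg10 w, aux_eval1]
    have h := hexp_mul w.1
    simp only [ContinuousLinearMap.coe_fst']
    field_simp
    have h' : Real.exp (-(w.1 / τ₀)) = Real.exp (-w.1 / τ₀) := by rw [neg_div]
    rw [h']
    linear_combination ((fderiv ℝ u (g w)) (1, 0)) * h
  -- value of fderiv U in the X-direction
  have hU01 : ∀ w : ℝ × ℝ, fderiv ℝ U w (0, 1)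
      = (τ₀ * Real.exp (-w.1 / τ₀)) * fderiv ℝ u (g w) (0, 1) := by
    intro w
    rw [(hUd w).fderiv]
    simp only [ContinuousLinearMap.add_apply, ContinuousLinearMap.smul_apply,
      ContinuousLinearMap.comp_apply, ContinuousLinearMap.neg_apply, smul_eq_mul]
    rw [hDg01 w]
    simp [ContinuousLinearMap.coe_fst']
  have hUval : ∀ w : ℝ × ℝ, U w = τ₀ * Real.exp (-w.1 / τ₀) * u (g w) := by
    intro w; rw [hU]
  -- the first bracket equals v_y ∘ g
  have hF : (fun w' => fderiv ℝ U w' (1, 0) + U w' / τ₀)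
      = fun w' => fderiv ℝ v (g w') (0, 1) := by
    funext w
    rw [hU10 w, hUval w]
    have h1 : fderiv ℝ u (g w) (1, 0) = fderiv ℝ v (g w) (0, 1) :=
      sub_eq_zero.mp (heq₁ (g w))
    rw [← h1]
    field_simp
    ring
  -- the second bracket equals (e^{t/τ₀}/τ₀) · (v_x ∘ g)
  have hG : (fun w' => χ₀ ^ 2 / (U w') ^ 2 * fderiv ℝ U w' (0, 1))
      = fun w' => (Real.exp (w'.1 / τ₀) / τ₀) * fderiv ℝ v (g w') (1, 0) := by
    funext w
    rw [hU01 w, hUval w]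
    have h2 : fderiv ℝ v (g w) (1, 0)
        = χ₀ ^ 2 / (u (g w)) ^ 2 * fderiv ℝ u (g w) (0, 1) :=
      sub_eq_zero.mp (heq₂ (g w))
    rw [h2]
    have hup : u (g w) ≠ 0 := (hupos (g w)).ne'
    have hE : Real.exp (w.1 / τ₀) ≠ 0 := Real.exp_ne_zero _
    have hEm : Real.exp (-w.1 / τ₀) = (Real.exp (w.1 / τ₀))⁻¹ := by
      rw [neg_div, Real.exp_neg]
    rw [hEm]
    field_simp
  rw [hF, hG]
  -- second derivative of v
  have hvd : ∀ p : ℝ × ℝ, HasFDerivAt (fderiv ℝ v) (fderiv ℝ (fderiv ℝ v) p) p := by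
    intro p
    exact (((hv.fderiv_right (m := 1) (by norm_num)).differentiable one_ne_zero) p).hasFDerivAt
  set B : ℝ × ℝ →L[ℝ] (ℝ × ℝ →L[ℝ] ℝ) := fderiv ℝ (fderiv ℝ v) (g w₀) with hBdef
  have hcomp : HasFDerivAt (fun w => fderiv ℝ v (g w)) (B.comp (Dg w₀)) w₀ :=
    (hvd (g w₀)).comp w₀ (hg w₀)
  -- derivative of the first bracket
  have hFd : HasFDerivAt (fun w => fderiv ℝ v (g w) ((0 : ℝ), (1 : ℝ)))
      ((ContinuousLinearMap.apply ℝ ℝ ((0 : ℝ), (1 : ℝ))).comp (B.comp (Dg w₀))) w₀ :=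
    (ContinuousLinearMap.apply ℝ ℝ ((0 : ℝ), (1 : ℝ))).hasFDerivAt.comp w₀ hcomp
  have hFval : fderiv ℝ (fun w => fderiv ℝ v (g w) ((0 : ℝ), (1 : ℝ))) w₀ (1, 0)
      = (Real.exp (w₀.1 / τ₀) / τ₀) * B (1, 0) (0, 1) := by
    rw [hFd.fderiv]
    simp only [ContinuousLinearMap.comp_apply, ContinuousLinearMap.apply_apply]
    rw [hDg10 w₀, aux_eval2]
  -- derivative of the second bracket
  have hGv : HasFDerivAt (fun w => fderiv ℝ v (g w) ((1 : ℝ), (0 : ℝ)))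
      ((ContinuousLinearMap.apply ℝ ℝ ((1 : ℝ), (0 : ℝ))).comp (B.comp (Dg w₀))) w₀ :=
    (ContinuousLinearMap.apply ℝ ℝ ((1 : ℝ), (0 : ℝ))).hasFDerivAt.comp w₀ hcomp
  have hGd : HasFDerivAt (fun w => (Real.exp (w.1 / τ₀) / τ₀) * fderiv ℝ v (g w) ((1 : ℝ), (0 : ℝ))) _ w₀ :=
    (aux_exp3 τ₀ w₀).mul hGv
  have hGval : fderiv ℝ (fun w => (Real.exp (w.1 / τ₀) / τ₀) * fderiv ℝ v (g w) ((1 : ℝ), (0 : ℝ))) w₀ (0, 1)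
      = (Real.exp (w₀.1 / τ₀) / τ₀) * B (0, 1) (1, 0) := by
    rw [hGd.fderiv]
    simp only [ContinuousLinearMap.add_apply, ContinuousLinearMap.smul_apply,
      ContinuousLinearMap.comp_apply, ContinuousLinearMap.apply_apply, smul_eq_mul]
    rw [hDg01 w₀]
    simp [ContinuousLinearMap.coe_fst']
  rw [hFval, hGval]
  have hsym : B (1, 0) (0, 1) = B (0, 1) (1, 0) :=
    (hv.contDiffAt.isSymmSndFDerivAt (by norm_num)).eq (1, 0) (0, 1)
  rw [hsym]
  ring
end

section
/- Let γ ≠ ±1, set α = 1/2 + (γ−1)/4 and β = 1/2 − (γ−1)/4 (so α ≠ β), and define the gas-dynamics eigenvalues λ₁(r₁,r₂) = αr₁ + βr₂ and λ₂(r₁,r₂) = αr₂ + βr₁. Let x : ℝ² → ℝ be a C² function on an open subset of {(r₁,r₂) : r₁ > r₂} satisfying ∂²x/∂r₁∂r₂ − (1/(λ₁−λ₂))(∂λ₂/∂r₂) ∂x/∂r₁ + (1/(λ₁−λ₂))(∂λ₁/∂r₁) ∂x/∂r₂ = 0. Then φ(r₁,r₂) := (r₁−r₂)^{(α+β)/(α−β)}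 · x(r₁,r₂) = (r₁−r₂)^{2/(γ−1)} x(r₁,r₂) satisfies ∂²φ/∂r₁∂r₂ + (1/(λ₁−λ₂))(∂λ₁/∂r₂) ∂φ/∂r₁ − (1/(λ₁−λ₂))(∂λ₂/∂r₁) ∂φ/∂r₂ = 0 on the same set. -/
lemma aux_rpow (r : ℝ) (p : ℝ × ℝ) (hp : 0 < p.1 - p.2) :
    HasFDerivAt (fun q : ℝ × ℝ => (q.1 - q.2) ^ r)
      ((r * (p.1 - p.2) ^ (r - 1)) •
        (ContinuousLinearMap.fst ℝ ℝ ℝ - ContinuousLinearMap.snd ℝ ℝ ℝ)) p := by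
  have h1 : HasFDerivAt (fun q : ℝ × ℝ => q.1 - q.2)
      (ContinuousLinearMap.fst ℝ ℝ ℝ - ContinuousLinearMap.snd ℝ ℝ ℝ) p :=
    (hasFDerivAt_fst (𝕜 := ℝ)).sub (hasFDerivAt_snd (𝕜 := ℝ))
  have h2 : HasDerivAt (fun t : ℝ => t ^ r) (r * (p.1 - p.2) ^ (r - 1)) (p.1 - p.2) :=
    Real.hasDerivAt_rpow_const (Or.inl (ne_of_gt hp))
  exact h2.comp_hasFDerivAt p h1

set_option maxHeartbeats 1600000 in
/-- For the polytropic gas eigenvalues `λ₁ = αr₁+βr₂`, `λ₂ = αr₂+βr₁`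
(`α = 1/2+(γ−1)/4`, `β = 1/2−(γ−1)/4`, `γ ≠ ±1`), if `x` satisfies its second-order
hodograph equation on an open subset of `{r₁ > r₂}`, then
`φ = (r₁−r₂)^{(α+β)/(α−β)} x = (r₁−r₂)^{2/(γ−1)} x` satisfies the second-order
conservation-law equation there. -/
theorem gas_dynamics_factor_function
    (γ : ℝ) (hγ : γ ≠ 1) (hγ' : γ ≠ -1)
    (α β : ℝ) (hα : α = 1 / 2 + (γ - 1) / 4) (hβ : β = 1 / 2 - (γ - 1) / 4)
    (Ω : Set (ℝ × ℝ)) (hΩ : IsOpen Ω) (hΩsub : Ω ⊆ {p : ℝ × ℝ | p.2 < p.1})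
    (x : ℝ × ℝ → ℝ) (hx : ContDiffOn ℝ 2 x Ω)
    -- `∂²x/∂r₁∂r₂ − (∂λ₂/∂r₂)/(λ₁−λ₂) ∂x/∂r₁ + (∂λ₁/∂r₁)/(λ₁−λ₂) ∂x/∂r₂ = 0`,
    -- with `∂λ₂/∂r₂ = ∂λ₁/∂r₁ = α` and `λ₁ − λ₂ = (α−β)(r₁−r₂)`:
    (heq : ∀ p ∈ Ω,
      fderiv ℝ (fun q => fderiv ℝ x q (0, 1)) p (1, 0)
        - 1 / ((α * p.1 + β * p.2) - (α * p.2 + β * p.1)) * α * fderiv ℝ x p (1, 0)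
        + 1 / ((α * p.1 + β * p.2) - (α * p.2 + β * p.1)) * α * fderiv ℝ x p (0, 1)
        = 0) :
    (α + β) / (α - β) = 2 / (γ - 1)
    ∧ ∀ p ∈ Ω,
      -- `∂²φ/∂r₁∂r₂ + (∂λ₁/∂r₂)/(λ₁−λ₂) ∂φ/∂r₁ − (∂λ₂/∂r₁)/(λ₁−λ₂) ∂φ/∂r₂ = 0`,
      -- with `∂λ₁/∂r₂ = ∂λ₂/∂r₁ = β` and `φ = (r₁−r₂)^{(α+β)/(α−β)} x`:
      fderiv ℝ (fun q =>
          fderiv ℝ (fun q' => (q'.1 - q'.2) ^ ((α + β) / (α - β)) * x q') q (0, 1))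
          p (1, 0)
        + 1 / ((α * p.1 + β * p.2) - (α * p.2 + β * p.1)) * β
          * fderiv ℝ (fun q' => (q'.1 - q'.2) ^ ((α + β) / (α - β)) * x q') p (1, 0)
        - 1 / ((α * p.1 + β * p.2) - (α * p.2 + β * p.1)) * β
          * fderiv ℝ (fun q' => (q'.1 - q'.2) ^ ((α + β) / (α - β)) * x q') p (0, 1)
        = 0 := by
  have hγ1 : γ - 1 ≠ 0 := sub_ne_zero.mpr hγ
  subst hα hβ
  set c : ℝ := ((1 / 2 + (γ - 1) / 4) + (1 / 2 - (γ - 1) / 4))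
      / ((1 / 2 + (γ - 1) / 4) - (1 / 2 - (γ - 1) / 4)) with hc
  have hc2 : c = 2 / (γ - 1) := by
    rw [hc, div_eq_div_iff (by intro h; apply hγ1; linarith) hγ1]; ring
  refine ⟨hc2, ?_⟩
  intro p hp
  have hup : 0 < p.1 - p.2 := sub_pos.mpr (hΩsub hp)
  have hune : p.1 - p.2 ≠ 0 := ne_of_gt hup
  have hxdiff : ∀ q ∈ Ω, DifferentiableAt ℝ x q := fun q hq =>
    (hx.contDiffAt (hΩ.mem_nhds hq)).differentiableAt (by norm_num)
  have hφd : ∀ q ∈ Ω, fderiv ℝ (fun q' => (q'.1 - q'.2) ^ c * x q') q (0, 1)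
      = (q.1 - q.2) ^ c * fderiv ℝ x q (0, 1)
        - c * (q.1 - q.2) ^ (c - 1) * x q := by
    intro q hq
    have huq : 0 < q.1 - q.2 := sub_pos.mpr (hΩsub hq)
    rw [HasFDerivAt.fderiv (f := fun q' => (q'.1 - q'.2) ^ c * x q')
      ((aux_rpow c q huq).mul (hxdiff q hq).hasFDerivAt)]
    simp [ContinuousLinearMap.add_apply, ContinuousLinearMap.smul_apply,
      ContinuousLinearMap.sub_apply, smul_eq_mul]
    ring
  have hφd1 : fderiv ℝ (fun q' => (q'.1 - q'.2) ^ c * x q') p (1, 0)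
      = (p.1 - p.2) ^ c * fderiv ℝ x p (1, 0)
        + c * (p.1 - p.2) ^ (c - 1) * x p := by
    rw [HasFDerivAt.fderiv (f := fun q' => (q'.1 - q'.2) ^ c * x q')
      ((aux_rpow c p hup).mul (hxdiff p hp).hasFDerivAt)]
    simp [ContinuousLinearMap.add_apply, ContinuousLinearMap.smul_apply,
      ContinuousLinearMap.sub_apply, smul_eq_mul]
    ring
  have hev : (fun q => fderiv ℝ (fun q' => (q'.1 - q'.2) ^ c * x q') q (0, 1))
      =ᶠ[nhds p] (fun q => (q.1 - q.2) ^ c * fderiv ℝ x q (0, 1)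
        - c * (q.1 - q.2) ^ (c - 1) * x q) := by
    filter_upwards [hΩ.mem_nhds hp] with q hq using hφd q hq
  have hC2 : ContDiffAt ℝ 2 x p := hx.contDiffAt (hΩ.mem_nhds hp)
  have hC1 : ContDiffAt ℝ 1 (fderiv ℝ x) p := hC2.fderiv_right (by norm_num)
  have hX2diff : DifferentiableAt ℝ (fun q => fderiv ℝ x q ((0 : ℝ), (1 : ℝ))) p :=
    (hC1.differentiableAt (by norm_num)).clm_apply (differentiableAt_const _)
  have hG1 := (aux_rpow c p hup).mul hX2diff.hasFDerivAt
  have hG2 := ((aux_rpow (c - 1) p hup).const_mul c).mul (hxdiff p hp).hasFDerivAt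
  have hGd := HasFDerivAt.fderiv (f := fun q => (q.1 - q.2) ^ c * fderiv ℝ x q (0, 1)
    - c * (q.1 - q.2) ^ (c - 1) * x q) (hG1.sub hG2)
  have hmain : fderiv ℝ (fun q =>
      fderiv ℝ (fun q' => (q'.1 - q'.2) ^ c * x q') q (0, 1)) p (1, 0)
      = (p.1 - p.2) ^ c * fderiv ℝ (fun q => fderiv ℝ x q (0, 1)) p (1, 0)
        + fderiv ℝ x p (0, 1) * (c * (p.1 - p.2) ^ (c - 1))
        - (c * (p.1 - p.2) ^ (c - 1) * fderiv ℝ x p (1, 0)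
          + x p * (c * ((c - 1) * (p.1 - p.2) ^ (c - 1 - 1)))) := by
    rw [hev.fderiv_eq, hGd]
    simp [ContinuousLinearMap.add_apply, ContinuousLinearMap.smul_apply,
      ContinuousLinearMap.sub_apply, smul_eq_mul]
    try ring
  rw [hmain, hφd p hp, hφd1]
  have e1 : (p.1 - p.2) ^ (c - 1) = (p.1 - p.2) ^ c / (p.1 - p.2) := by
    rw [Real.rpow_sub hup, Real.rpow_one]
  have e2 : (p.1 - p.2) ^ (c - 1 - 1) = (p.1 - p.2) ^ c / (p.1 - p.2) / (p.1 - p.2) := by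
    rw [Real.rpow_sub hup, Real.rpow_sub hup, Real.rpow_one]
  have hx12 := heq p hp
  set u : ℝ := p.1 - p.2 with hu
  set A : ℝ := u ^ c with hA
  set X : ℝ := x p
  set X1 : ℝ := fderiv ℝ x p (1, 0)
  set X2 : ℝ := fderiv ℝ x p (0, 1)
  set X12 : ℝ := fderiv ℝ (fun q => fderiv ℝ x q (0, 1)) p (1, 0)
  rw [e1, e2, hc2]
  have hden : (1 / 2 + (γ - 1) / 4) * p.1 + (1 / 2 - (γ - 1) / 4) * p.2
      - ((1 / 2 + (γ - 1) / 4) * p.2 + (1 / 2 - (γ - 1) / 4) * p.1)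
      = (γ - 1) / 2 * u := by rw [hu]; ring
  rw [hden] at hx12 ⊢
  have hX12 : X12 = 1 / ((γ - 1) / 2 * u) * (1 / 2 + (γ - 1) / 4) * X1
      - 1 / ((γ - 1) / 2 * u) * (1 / 2 + (γ - 1) / 4) * X2 := by linarith
  rw [hX12]
  field_simp
  ring
end

section
/- Let w : ℝ² → ℝ be a C² function of (x,t) satisfying the Born–Infeld equation [1+(∂w/∂x)²] ∂²w/∂t² − 2 (∂w/∂x)(∂w/∂t) ∂²w/∂x∂t − [1−(∂w/∂t)²] ∂²w/∂x² = 0 on an open set where 1 + (∂w/∂x)² − (∂w/∂t)² > 0. With u := ∂w/∂x, v := ∂w/∂t, define r := (−uv − √(1+u²−v²))/(1+u²) and s := (−uv + √(1+u²−v²))/(1+u²). Then r and s satisfy ∂r/∂t + s ∂r/∂x = 0 and ∂s/∂t + r ∂s/∂x = 0 on that set. -/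
lemma aux_fderiv (u v : ℝ × ℝ → ℝ) (p : ℝ × ℝ)
    (hu : DifferentiableAt ℝ u p) (hv : DifferentiableAt ℝ v p)
    (hD : 0 < 1 + u p ^ 2 - v p ^ 2) (ε : ℝ) (h : ℝ × ℝ) :
    fderiv ℝ (fun q => (-(u q * v q) + ε * Real.sqrt (1 + u q ^ 2 - v q ^ 2))
        / (1 + u q ^ 2)) p h
      = ((-(u p * fderiv ℝ v p h + v p * fderiv ℝ u p h)
            + ε * ((u p * fderiv ℝ u p h - v p * fderiv ℝ v p h)
              / Real.sqrt (1 + u p ^ 2 - v p ^ 2))) * (1 + u p ^ 2)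
          - (-(u p * v p) + ε * Real.sqrt (1 + u p ^ 2 - v p ^ 2))
            * (2 * u p * fderiv ℝ u p h))
        / (1 + u p ^ 2) ^ 2 := by
  have hA : (0:ℝ) < 1 + u p ^ 2 := by positivity
  have hσ : 0 < Real.sqrt (1 + u p ^ 2 - v p ^ 2) := Real.sqrt_pos.2 hD
  have hu' := hu.hasFDerivAt
  have hv' := hv.hasFDerivAt
  have hu2 : HasFDerivAt (fun q => u q ^ 2) (((2:ℕ) * u p ^ 1) • fderiv ℝ u p) p :=
    (hasDerivAt_pow 2 (u p)).comp_hasFDerivAt p hu'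
  have hv2 : HasFDerivAt (fun q => v q ^ 2) (((2:ℕ) * v p ^ 1) • fderiv ℝ v p) p :=
    (hasDerivAt_pow 2 (v p)).comp_hasFDerivAt p hv'
  have hg : HasFDerivAt (fun q => 1 + u q ^ 2 - v q ^ 2)
      ((0 : ℝ × ℝ →L[ℝ] ℝ) + ((2:ℕ) * u p ^ 1) • fderiv ℝ u p
        - ((2:ℕ) * v p ^ 1) • fderiv ℝ v p) p :=
    ((hasFDerivAt_const (1:ℝ) p).add hu2).sub hv2
  have hsq : HasFDerivAt (fun q => Real.sqrt (1 + u q ^ 2 - v q ^ 2))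
      ((1 / (2 * Real.sqrt (1 + u p ^ 2 - v p ^ 2)))
        • ((0 : ℝ × ℝ →L[ℝ] ℝ) + ((2:ℕ) * u p ^ 1) • fderiv ℝ u p
          - ((2:ℕ) * v p ^ 1) • fderiv ℝ v p)) p :=
    (Real.hasDerivAt_sqrt hD.ne').comp_hasFDerivAt p hg
  have hεsq := hsq.const_mul ε
  have hN : HasFDerivAt (fun q => -(u q * v q) + ε * Real.sqrt (1 + u q ^ 2 - v q ^ 2))
      (-(u p • fderiv ℝ v p + v p • fderiv ℝ u p)
        + ε • ((1 / (2 * Real.sqrt (1 + u p ^ 2 - v p ^ 2)))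
          • ((0 : ℝ × ℝ →L[ℝ] ℝ) + ((2:ℕ) * u p ^ 1) • fderiv ℝ u p
            - ((2:ℕ) * v p ^ 1) • fderiv ℝ v p))) p :=
    ((hu'.mul hv').neg).add hεsq
  have hden : HasFDerivAt (fun q => 1 + u q ^ 2)
      ((0 : ℝ × ℝ →L[ℝ] ℝ) + ((2:ℕ) * u p ^ 1) • fderiv ℝ u p) p :=
    (hasFDerivAt_const (1:ℝ) p).add hu2
  have hinv : HasFDerivAt (fun q => (1 + u q ^ 2)⁻¹)
      ((-((1 + u p ^ 2) ^ 2)⁻¹)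
        • ((0 : ℝ × ℝ →L[ℝ] ℝ) + ((2:ℕ) * u p ^ 1) • fderiv ℝ u p)) p :=
    (hasDerivAt_inv hA.ne').comp_hasFDerivAt p hden
  have hfin := hN.mul hinv
  have heq : (fun q => (-(u q * v q) + ε * Real.sqrt (1 + u q ^ 2 - v q ^ 2))
      / (1 + u q ^ 2))
      = fun q => (-(u q * v q) + ε * Real.sqrt (1 + u q ^ 2 - v q ^ 2))
        * (1 + u q ^ 2)⁻¹ := by
    funext q; rw [div_eq_mul_inv]
  rw [heq, (show HasFDerivAt (fun q => (-(u q * v q) + ε * Real.sqrt (1 + u q ^ 2 - v q ^ 2))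
      * (1 + u q ^ 2)⁻¹) _ p from hfin).fderiv]
  simp only [ContinuousLinearMap.add_apply, ContinuousLinearMap.smul_apply,
    ContinuousLinearMap.neg_apply, ContinuousLinearMap.sub_apply,
    ContinuousLinearMap.zero_apply, smul_eq_mul]
  field_simp
  ring

lemma alg_r (a b σ ux m vt : ℝ) (hσ : σ ≠ 0)
    (hσ2 : σ ^ 2 = 1 + a ^ 2 - b ^ 2)
    (hBI : (1 + a ^ 2) * vt - 2 * a * b * m - (1 - b ^ 2) * ux = 0) :
    ((-(a * vt + b * m) + (-1) * ((a * m - b * vt) / σ)) * (1 + a ^ 2)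
        - (-(a * b) + (-1) * σ) * (2 * a * m)) / (1 + a ^ 2) ^ 2
      + (-(a * b) + 1 * σ) / (1 + a ^ 2) *
        (((-(a * m + b * ux) + (-1) * ((a * ux - b * m) / σ)) * (1 + a ^ 2)
          - (-(a * b) + (-1) * σ) * (2 * a * ux)) / (1 + a ^ 2) ^ 2) = 0 := by
  have hA : (1:ℝ) + a ^ 2 ≠ 0 := by positivity
  have hP : (1 + a ^ 2) * ((-σ * (a * vt + b * m) - (a * m - b * vt)) * (1 + a ^ 2)
        - 2 * a * σ * (-(a * b) - σ) * m)
      + (-(a * b) + σ) * ((-σ * (a * m + b * ux) - (a * ux - b * m)) * (1 + a ^ 2)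
        - 2 * a * σ * (-(a * b) - σ) * ux) = 0 := by
    linear_combination (a * m * (1 + a ^ 2) + ux * (2 * a * σ - b * (1 + a ^ 2))) * hσ2
      + ((1 + a ^ 2) * (b - σ * a)) * hBI
  have hE : ((-(a * vt + b * m) + (-1) * ((a * m - b * vt) / σ)) * (1 + a ^ 2)
        - (-(a * b) + (-1) * σ) * (2 * a * m)) / (1 + a ^ 2) ^ 2
      + (-(a * b) + 1 * σ) / (1 + a ^ 2) *
        (((-(a * m + b * ux) + (-1) * ((a * ux - b * m) / σ)) * (1 + a ^ 2)
          - (-(a * b) + (-1) * σ) * (2 * a * ux)) / (1 + a ^ 2) ^ 2)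
      = ((1 + a ^ 2) * ((-σ * (a * vt + b * m) - (a * m - b * vt)) * (1 + a ^ 2)
            - 2 * a * σ * (-(a * b) - σ) * m)
          + (-(a * b) + σ) * ((-σ * (a * m + b * ux) - (a * ux - b * m)) * (1 + a ^ 2)
            - 2 * a * σ * (-(a * b) - σ) * ux)) / (σ * (1 + a ^ 2) ^ 3) := by
    field_simp
    ring
  rw [hE, hP, zero_div]

lemma alg_s (a b σ ux m vt : ℝ) (hσ : σ ≠ 0)
    (hσ2 : σ ^ 2 = 1 + a ^ 2 - b ^ 2)
    (hBI : (1 + a ^ 2) * vt - 2 * a * b * m - (1 - b ^ 2) * ux = 0) :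
    ((-(a * vt + b * m) + 1 * ((a * m - b * vt) / σ)) * (1 + a ^ 2)
        - (-(a * b) + 1 * σ) * (2 * a * m)) / (1 + a ^ 2) ^ 2
      + (-(a * b) + (-1) * σ) / (1 + a ^ 2) *
        (((-(a * m + b * ux) + 1 * ((a * ux - b * m) / σ)) * (1 + a ^ 2)
          - (-(a * b) + 1 * σ) * (2 * a * ux)) / (1 + a ^ 2) ^ 2) = 0 := by
  have hA : (1:ℝ) + a ^ 2 ≠ 0 := by positivity
  have hP : (1 + a ^ 2) * ((-σ * (a * vt + b * m) + (a * m - b * vt)) * (1 + a ^ 2)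
        - 2 * a * σ * (-(a * b) + σ) * m)
      + (-(a * b) - σ) * ((-σ * (a * m + b * ux) + (a * ux - b * m)) * (1 + a ^ 2)
        - 2 * a * σ * (-(a * b) + σ) * ux) = 0 := by
    linear_combination (-(a * m) * (1 + a ^ 2) + ux * (2 * a * σ + b * (1 + a ^ 2))) * hσ2
      + (-((1 + a ^ 2) * (a * σ + b))) * hBI
  have hE : ((-(a * vt + b * m) + 1 * ((a * m - b * vt) / σ)) * (1 + a ^ 2)
        - (-(a * b) + 1 * σ) * (2 * a * m)) / (1 + a ^ 2) ^ 2
      + (-(a * b) + (-1) * σ) / (1 + a ^ 2) *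
        (((-(a * m + b * ux) + 1 * ((a * ux - b * m) / σ)) * (1 + a ^ 2)
          - (-(a * b) + 1 * σ) * (2 * a * ux)) / (1 + a ^ 2) ^ 2)
      = ((1 + a ^ 2) * ((-σ * (a * vt + b * m) + (a * m - b * vt)) * (1 + a ^ 2)
            - 2 * a * σ * (-(a * b) + σ) * m)
          + (-(a * b) - σ) * ((-σ * (a * m + b * ux) + (a * ux - b * m)) * (1 + a ^ 2)
            - 2 * a * σ * (-(a * b) + σ) * ux)) / (σ * (1 + a ^ 2) ^ 3) := by
    field_simp
    ring
  rw [hE, hP, zero_div]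

/-- For a C² solution `w(x,t)` of the Born–Infeld equation on an open
set where `1 + w_x² − w_t² > 0`, the Riemann invariants
`r = (−uv − √(1+u²−v²))/(1+u²)`, `s = (−uv + √(1+u²−v²))/(1+u²)` (with `u = w_x`,
`v = w_t`) satisfy `∂r/∂t + s ∂r/∂x = 0` and `∂s/∂t + r ∂s/∂x = 0`.
Here points of `ℝ × ℝ` are `(x, t)`. -/
theorem born_infeld_riemann_invariants
    (w : ℝ × ℝ → ℝ) (Ω : Set (ℝ × ℝ)) (hΩ : IsOpen Ω)
    (hw : ContDiffOn ℝ 2 w Ω)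
    (hhyp : ∀ p ∈ Ω, 0 < 1 + fderiv ℝ w p (1, 0) ^ 2 - fderiv ℝ w p (0, 1) ^ 2)
    (hBI : ∀ p ∈ Ω,
      (1 + fderiv ℝ w p (1, 0) ^ 2)
          * fderiv ℝ (fun q => fderiv ℝ w q (0, 1)) p (0, 1)
        - 2 * fderiv ℝ w p (1, 0) * fderiv ℝ w p (0, 1)
          * fderiv ℝ (fun q => fderiv ℝ w q (0, 1)) p (1, 0)
        - (1 - fderiv ℝ w p (0, 1) ^ 2)
          * fderiv ℝ (fun q => fderiv ℝ w q (1, 0)) p (1, 0) = 0)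
    (r s : ℝ × ℝ → ℝ)
    (hr : r = fun q =>
      (-(fderiv ℝ w q (1, 0) * fderiv ℝ w q (0, 1))
        - Real.sqrt (1 + fderiv ℝ w q (1, 0) ^ 2 - fderiv ℝ w q (0, 1) ^ 2))
      / (1 + fderiv ℝ w q (1, 0) ^ 2))
    (hs : s = fun q =>
      (-(fderiv ℝ w q (1, 0) * fderiv ℝ w q (0, 1))
        + Real.sqrt (1 + fderiv ℝ w q (1, 0) ^ 2 - fderiv ℝ w q (0, 1) ^ 2))
      / (1 + fderiv ℝ w q (1, 0) ^ 2)) :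
    ∀ p ∈ Ω,
      (fderiv ℝ r p (0, 1) + s p * fderiv ℝ r p (1, 0) = 0)
      ∧ (fderiv ℝ s p (0, 1) + r p * fderiv ℝ s p (1, 0) = 0) := by
  subst hr hs
  intro p hp
  have hwp : ContDiffAt ℝ 2 w p := hw.contDiffAt (hΩ.mem_nhds hp)
  have hΦ : ContDiffAt ℝ 1 (fderiv ℝ w) p := hwp.fderiv_right (le_refl 2)
  have hΦd : DifferentiableAt ℝ (fderiv ℝ w) p := hΦ.differentiableAt one_ne_zero
  have hud : DifferentiableAt ℝ (fun q => fderiv ℝ w q (1, 0)) p :=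
    hΦd.clm_apply (differentiableAt_const _)
  have hvd : DifferentiableAt ℝ (fun q => fderiv ℝ w q (0, 1)) p :=
    hΦd.clm_apply (differentiableAt_const _)
  have hD := hhyp p hp
  have hsymm : IsSymmSndFDerivAt ℝ w p := hwp.isSymmSndFDerivAt (by simp [minSmoothness_of_isRCLikeNormedField])
  have hut : fderiv ℝ (fun q => fderiv ℝ w q (1, 0)) p (0, 1)
      = fderiv ℝ (fun q => fderiv ℝ w q (0, 1)) p (1, 0) := by
    rw [fderiv_clm_apply hΦd (differentiableAt_const _),
      fderiv_clm_apply hΦd (differentiableAt_const _)]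
    simpa using hsymm (0, 1) (1, 0)
  have hrw1 : (fun q =>
      (-(fderiv ℝ w q (1, 0) * fderiv ℝ w q (0, 1))
        - Real.sqrt (1 + fderiv ℝ w q (1, 0) ^ 2 - fderiv ℝ w q (0, 1) ^ 2))
      / (1 + fderiv ℝ w q (1, 0) ^ 2))
      = fun q =>
      (-(fderiv ℝ w q (1, 0) * fderiv ℝ w q (0, 1))
        + (-1 : ℝ) * Real.sqrt (1 + fderiv ℝ w q (1, 0) ^ 2 - fderiv ℝ w q (0, 1) ^ 2))
      / (1 + fderiv ℝ w q (1, 0) ^ 2) := by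
    funext q; ring
  have hrw2 : (fun q =>
      (-(fderiv ℝ w q (1, 0) * fderiv ℝ w q (0, 1))
        + Real.sqrt (1 + fderiv ℝ w q (1, 0) ^ 2 - fderiv ℝ w q (0, 1) ^ 2))
      / (1 + fderiv ℝ w q (1, 0) ^ 2))
      = fun q =>
      (-(fderiv ℝ w q (1, 0) * fderiv ℝ w q (0, 1))
        + (1 : ℝ) * Real.sqrt (1 + fderiv ℝ w q (1, 0) ^ 2 - fderiv ℝ w q (0, 1) ^ 2))
      / (1 + fderiv ℝ w q (1, 0) ^ 2) := by
    funext q; ring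
  have hσ : Real.sqrt (1 + fderiv ℝ w p (1, 0) ^ 2 - fderiv ℝ w p (0, 1) ^ 2) ≠ 0 :=
    (Real.sqrt_pos.2 hD).ne'
  have hσ2 : Real.sqrt (1 + fderiv ℝ w p (1, 0) ^ 2 - fderiv ℝ w p (0, 1) ^ 2) ^ 2
      = 1 + fderiv ℝ w p (1, 0) ^ 2 - fderiv ℝ w p (0, 1) ^ 2 := Real.sq_sqrt hD.le
  rw [hrw1, hrw2]
  rw [aux_fderiv _ _ p hud hvd hD (-1) (0, 1), aux_fderiv _ _ p hud hvd hD (-1) (1, 0),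
    aux_fderiv _ _ p hud hvd hD 1 (0, 1), aux_fderiv _ _ p hud hvd hD 1 (1, 0)]
  rw [hut]
  beta_reduce
  constructor
  · exact alg_r _ _ _ _ _ _ hσ hσ2 (hBI p hp)
  · exact alg_s _ _ _ _ _ _ hσ hσ2 (hBI p hp)
end
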